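/- Let F be a field, V a vector space over F, n ≥ 1, and D an n-determinant on V. Given an n×n matrix A = (a_{i,j}) over F and an n-tuple T = (v_1, …, v_n) of vectors in V, define A·T to be the n-tuple (w_1, …, w_n) with w_i = Σ_{j=1}^{n} a_{i,j}·v_j. Then D(A·T) = det(A)·D(T), where det(A) is the standard determinant of the matrix A. -/

import Mathlib

/-- The "main equation" for a function `D : V^n → F`:
for every `(n+1)`-tuple `v₁, …, vₙ, b`,
`D(v₁,…,vₙ) • b = ∑ₖ D(v₁,…,b,…,vₙ) • vₖ` (the `k`-th summand replaces `vₖ` by `b`). -/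
def MainEq (F : Type*) {V : Type*} [Field F] [AddCommGroup V] [Module F V]
    (n : ℕ) (D : (Fin n → V) → F) : Prop :=
  ∀ (v : Fin n → V) (b : V),
    D v • b = ∑ k : Fin n, D (Function.update v k b) • v k

/-- An `n`-determinant on `V`: a nonzero function `D : V^n → F` satisfying the main
equation, where moreover the dimension of `V` over `F` equals `n`. -/
def IsDeterminant (F V : Type*) [Field F] [AddCommGroup V] [Module F V]
    (n : ℕ) (D : (Fin n → V) → F) : Prop :=
  D ≠ 0 ∧ MainEq F n D ∧ Module.finrank F V = n

/-- `D : V^n → F` is multilinear: additive and homogeneous of degree 1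
in each variable separately. -/
def IsMultilinearFn (F : Type*) {V : Type*} [Field F] [AddCommGroup V] [Module F V]
    (n : ℕ) (D : (Fin n → V) → F) : Prop :=
  (∀ (v : Fin n → V) (k : Fin n) (u w : V),
      D (Function.update v k (u + w))
        = D (Function.update v k u) + D (Function.update v k w)) ∧
  (∀ (v : Fin n → V) (k : Fin n) (c : F) (u : V),
      D (Function.update v k (c • u)) = c * D (Function.update v k u))

/-- `D : V^n → F` is antisymmetric: interchanging any two arguments changes the sign. -/
def IsAntisymmetricFn (F : Type*) {V : Type*} [Field F] [AddCommGroup V] [Module F V]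
    (n : ℕ) (D : (Fin n → V) → F) : Prop :=
  ∀ (v : Fin n → V) (i j : Fin n), i ≠ j → D (v ∘ Equiv.swap i j) = - D v

section AuxStmt16
open Matrix

variable {F V : Type*} [Field F] [AddCommGroup V] [Module F V] {n : ℕ}
  {D : (Fin n → V) → F}

/-- Rewriting a linear combination of linear combinations. -/
private lemma aux16_comb (g : Fin n → F) (M : Matrix (Fin n) (Fin n) F) (u : Fin n → V) :
    ∑ i : Fin n, g i • (∑ j : Fin n, M i j • u j)
      = ∑ j : Fin n, (Matrix.mulVec Mᵀ g j) • u j := by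
  simp only [Finset.smul_sum, smul_smul, Matrix.mulVec, dotProduct,
    Matrix.transpose_apply, Finset.sum_smul]
  rw [Finset.sum_comm]
  simp [mul_comm]

/-- If `M` is invertible, applying it to an independent tuple keeps independence. -/
private lemma aux16_indep_map {M : Matrix (Fin n) (Fin n) F} (hdet : M.det ≠ 0)
    {u : Fin n → V} (hu : LinearIndependent F u) :
    LinearIndependent F (fun i => ∑ j : Fin n, M i j • u j) := by
  rw [Fintype.linearIndependent_iff] at hu ⊢
  intro g hg
  rw [aux16_comb] at hg
  have h2 : Matrix.mulVec Mᵀ g = 0 := funext fun j => hu _ hg j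
  by_contra hcon
  push_neg at hcon
  obtain ⟨i, hi⟩ := hcon
  have h3 : ∃ v, v ≠ 0 ∧ Matrix.mulVec Mᵀ v = 0 := ⟨g, fun h => hi (congrFun h i), h2⟩
  rw [Matrix.exists_mulVec_eq_zero_iff, Matrix.det_transpose] at h3
  exact hdet h3

/-- If `M` is singular, applying it to any tuple yields a dependent tuple. -/
private lemma aux16_dep_map {M : Matrix (Fin n) (Fin n) F} (hdet : M.det = 0)
    (u : Fin n → V) :
    ¬ LinearIndependent F (fun i => ∑ j : Fin n, M i j • u j) := by
  have hdt : Mᵀ.det = 0 := by rw [Matrix.det_transpose]; exact hdet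
  obtain ⟨g, hg0, hg⟩ := (Matrix.exists_mulVec_eq_zero_iff (M := Mᵀ)).mpr hdt
  intro hind
  rw [Fintype.linearIndependent_iff] at hind
  obtain ⟨i, hi⟩ := Function.ne_iff.mp hg0
  exact hi (hind g (by rw [aux16_comb, hg]; simp) i)

/-- From the main equation: if `D v ≠ 0` then every vector is in the span of `v`. -/
private lemma aux16_mem_span (hM : ∀ (v : Fin n → V) (b : V),
      D v • b = ∑ k : Fin n, D (Function.update v k b) • v k)
    {v : Fin n → V} (hv : D v ≠ 0) (b : V) : b ∈ Submodule.span F (Set.range v) := by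
  have h : b = (D v)⁻¹ • (D v • b) := by rw [smul_smul, inv_mul_cancel₀ hv, one_smul]
  rw [h, hM v b]
  exact Submodule.smul_mem _ _ (Submodule.sum_mem _ fun k _ =>
    Submodule.smul_mem _ _ (Submodule.subset_span ⟨k, rfl⟩))

/-- For a basis `e`, updating one slot: `D (update e k b) = D e * (e.repr b) k`. -/
private lemma aux16_update (hM : ∀ (v : Fin n → V) (b : V),
      D v • b = ∑ k : Fin n, D (Function.update v k b) • v k)
    (e : Module.Basis (Fin n) F V) (k : Fin n) (b : V) :
    D (Function.update (⇑e) k b) = D ⇑e * e.repr b k := by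
  have h0 : ∑ i : Fin n,
      (D (Function.update (⇑e) i b) - D ⇑e * e.repr b i) • e i = 0 := by
    simp only [sub_smul, Finset.sum_sub_distrib, mul_smul]
    rw [← hM ⇑e b, ← Finset.smul_sum, e.sum_repr b, sub_self]
  exact sub_eq_zero.mp (Fintype.linearIndependent_iff.mp e.linearIndependent _ h0 k)

/-- The diagonal case: `D` scales each slot. -/
private lemma aux16_diag (hM : ∀ (v : Fin n → V) (b : V),
      D v • b = ∑ k : Fin n, D (Function.update v k b) • v k)
    (hrank : Module.finrank F V = n) (hn : 1 ≤ n)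
    (d : Fin n → F) (hd : ∀ i, d i ≠ 0)
    {u : Fin n → V} (hu : LinearIndependent F u) :
    D (fun i => d i • u i) = (∏ i : Fin n, d i) * D u := by
  have : Nonempty (Fin n) := ⟨⟨0, hn⟩⟩
  have hcard : Fintype.card (Fin n) = Module.finrank F V := by simp [hrank]
  set e : Module.Basis (Fin n) F V := basisOfLinearIndependentOfCardEqFinrank hu hcard with he
  have hce : ⇑e = u := coe_basisOfLinearIndependentOfCardEqFinrank hu hcard
  have key : ∀ s : Finset (Fin n),
      D (fun i => if i ∈ s then d i • u i else u i) = (∏ i ∈ s, d i) * D u := by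
    intro s
    induction s using Finset.induction_on with
    | empty => simp
    | @insert a s ha ih =>
      set w : Fin n → Fˣ := fun i => if i ∈ s then Units.mk0 (d i) (hd i) else 1 with hw
      set e' : Module.Basis (Fin n) F V := e.unitsSMul w with he'
      have hce' : ⇑e' = fun i => if i ∈ s then d i • u i else u i := by
        funext i
        rw [he', Module.Basis.unitsSMul_apply, hw]
        by_cases h : i ∈ s <;> simp [h, hce]
      have hupd : (fun i => if i ∈ insert a s then d i • u i else u i)
          = Function.update (⇑e') a (d a • u a) := by
        funext i
        by_cases h : i = a
        · subst h; simp [Function.update_self, ha]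
        · simp [Function.update_of_ne h, hce', Finset.mem_insert, h]
      have hrepr : e'.repr (d a • u a) a = d a := by
        have hua : u a = e' a := by rw [hce']; simp [ha]
        rw [hua]
        simp
      rw [hupd, aux16_update hM e', hce', hrepr, Finset.prod_insert ha, ih]
      ring
  have := key Finset.univ
  simpa using this

/-- A transvection matrix acts on a tuple as a single-slot update. -/
private lemma aux16_transvec_tuple (i j : Fin n) (hij : i ≠ j) (c : F) (u : Fin n → V) :
    (fun k => ∑ l : Fin n, (Matrix.transvection i j c) k l • u l)
      = Function.update u i (u i + c • u j) := by
  funext k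
  by_cases h : k = i
  · subst h
    rw [Function.update_self]
    simp [Matrix.transvection, Matrix.add_apply, Matrix.one_apply,
      Matrix.single, add_smul, Finset.sum_add_distrib, ite_smul,
      Finset.sum_ite_eq, hij]
  · rw [Function.update_of_ne h]
    simp [Matrix.transvection, Matrix.add_apply, Matrix.one_apply,
      Matrix.single, add_smul, Finset.sum_add_distrib, ite_smul,
      Finset.sum_ite_eq, h]
    exact Finset.sum_eq_zero fun x _ => by
      rw [if_neg]; rintro ⟨h1, -⟩; exact h h1.symm

/-- The key identity for invertible matrices and linearly independent tuples. -/
private lemma aux16_det_mul (hM : ∀ (v : Fin n → V) (b : V),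
      D v • b = ∑ k : Fin n, D (Function.update v k b) • v k)
    (hrank : Module.finrank F V = n) (hn : 1 ≤ n)
    (M : Matrix (Fin n) (Fin n) F) (hdet : M.det ≠ 0) :
    ∀ u : Fin n → V, LinearIndependent F u →
      D (fun i => ∑ j : Fin n, M i j • u j) = M.det * D u := by
  have : Nonempty (Fin n) := ⟨⟨0, hn⟩⟩
  have hcard : Fintype.card (Fin n) = Module.finrank F V := by simp [hrank]
  apply Matrix.diagonal_transvection_induction_of_det_ne_zero
    (P := fun N => ∀ u : Fin n → V, LinearIndependent F u →
      D (fun i => ∑ j : Fin n, N i j • u j) = N.det * D u) M hdet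
  · -- diagonal
    intro d hd u hu
    have hd' : ∀ i, d i ≠ 0 := by
      intro i hi
      apply hd
      rw [Matrix.det_diagonal]
      exact Finset.prod_eq_zero (Finset.mem_univ i) hi
    have htup : (fun i => ∑ j : Fin n, (Matrix.diagonal d) i j • u j)
        = fun i => d i • u i := by
      funext i
      simp [Matrix.diagonal_apply, ite_smul, Finset.sum_ite_eq]
    rw [htup, Matrix.det_diagonal, aux16_diag hM hrank hn d hd' hu]
  · -- transvection
    intro t u hu
    rcases t with ⟨i, j, hij, c⟩
    have hdet1 : (Matrix.transvection i j c).det = 1 :=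
      Matrix.det_transvection_of_ne i j hij c
    simp only [Matrix.TransvectionStruct.toMatrix_mk]
    rw [aux16_transvec_tuple i j hij c u, hdet1, one_mul]
    set e : Module.Basis (Fin n) F V := basisOfLinearIndependentOfCardEqFinrank hu hcard with he
    have hce : ⇑e = u := coe_basisOfLinearIndependentOfCardEqFinrank hu hcard
    rw [← hce, aux16_update hM e i (e i + c • e j)]
    have : e.repr (e i + c • e j) i = 1 := by
      simp [Finsupp.single_apply, hij.symm, Ne.symm hij]
    rw [this, mul_one]
  · -- multiplication
    intro A B hA hB pA pB u hu
    have htup : (fun i => ∑ j : Fin n, (A * B) i j • u j)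
        = fun i => ∑ k : Fin n, A i k • (∑ j : Fin n, B k j • u j) := by
      funext i
      simp only [Matrix.mul_apply, Finset.sum_smul, Finset.smul_sum, smul_smul]
      exact Finset.sum_comm
    rw [htup, pA _ (aux16_indep_map hB hu), pB u hu, Matrix.det_mul]
    ring

/-- If the tuple is linearly dependent then `D` vanishes on it. -/
private lemma aux16_dep_zero (hM : ∀ (v : Fin n → V) (b : V),
      D v • b = ∑ k : Fin n, D (Function.update v k b) • v k)
    (hrank : Module.finrank F V = n)
    {u : Fin n → V} (hu : ¬ LinearIndependent F u) : D u = 0 := by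
  by_contra hD
  apply hu
  apply linearIndependent_of_top_le_span_of_card_eq_finrank
  · intro b _
    exact aux16_mem_span hM hD b
  · simp [hrank]

/-- If `T` is linearly dependent then so is `A·T`. -/
private lemma aux16_dep_mul (hrank : Module.finrank F V = n) (hn : 1 ≤ n)
    (A : Matrix (Fin n) (Fin n) F) {T : Fin n → V} (hT : ¬ LinearIndependent F T) :
    ¬ LinearIndependent F (fun i => ∑ j : Fin n, A i j • T j) := by
  have hfd : FiniteDimensional F V :=
    FiniteDimensional.of_finrank_pos (by omega)
  intro hind
  apply hT
  have hle : Submodule.span F (Set.range (fun i => ∑ j : Fin n, A i j • T j))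
      ≤ Submodule.span F (Set.range T) := by
    rw [Submodule.span_le]
    rintro x ⟨i, rfl⟩
    exact Submodule.sum_mem _ fun j _ =>
      Submodule.smul_mem _ _ (Submodule.subset_span ⟨j, rfl⟩)
  have h1 : Module.finrank F (Submodule.span F
      (Set.range (fun i => ∑ j : Fin n, A i j • T j))) = n := by
    rw [finrank_span_eq_card hind]
    simp
  have h2 : n ≤ Module.finrank F (Submodule.span F (Set.range T)) := by
    calc n = _ := h1.symm
      _ ≤ _ := Submodule.finrank_mono hle
  have h3 : Submodule.span F (Set.range T) = ⊤ := by
    apply Submodule.eq_top_of_finrank_eq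
    have := Submodule.finrank_le (Submodule.span F (Set.range T))
    omega
  exact linearIndependent_of_top_le_span_of_card_eq_finrank h3.ge (by simp [hrank])

end AuxStmt16

theorem stmt_16 (F V : Type*) [Field F] [AddCommGroup V] [Module F V]
    (n : ℕ) (hn : 1 ≤ n) (D : (Fin n → V) → F)
    (hD : IsDeterminant F V n D)
    (A : Matrix (Fin n) (Fin n) F) (T : Fin n → V) :
    D (fun i => ∑ j : Fin n, A i j • T j) = A.det * D T := by
  obtain ⟨hne, hM, hrank⟩ := hD
  by_cases hT : LinearIndependent F T
  · by_cases hdet : A.det = 0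
    · rw [hdet, zero_mul]
      exact aux16_dep_zero hM hrank (aux16_dep_map hdet T)
    · exact aux16_det_mul hM hrank hn A hdet T hT
  · rw [aux16_dep_zero hM hrank hT, mul_zero]
    exact aux16_dep_zero hM hrank (aux16_dep_mul hrank hn A hT)
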